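/- arXiv:1204.5536 — 2 statements merged into one kernel-verified Lean document; each statement's English description precedes it below -/
import Mathlib

section
/- Suppose the penalty P_n satisfies Assumption 4.1 (in particular P_n is concave with nonincreasing continuous derivative P_n' on (0,∞)). If β = (β_1,…,β_s) ∈ ℝ^s satisfies max_{j≤s} |β_j − β_{0S,j}| ≤ d_n, then |Σ_{j=1}^s (P_n(|β_j|) − P_n(|β_{0S,j}|))| ≤ ‖β − β_{0S}‖ · √s · P_n'(d_n). -/
/- Lemma B.1 of Fan & Liao, "Endogeneity in high dimensions":
   a Lipschitz-type bound for folded concave penalties near the true sparse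
   coefficients. -/

open Filter Topology

/-- **Lemma B.1**.  Let `P` be a penalty with `P(0) = 0`, concave and
nondecreasing on `[0,∞)` with continuous derivative `P'` on `(0,∞)`.  Let
`β_{0S} ∈ ℝ^s` have all coordinates nonzero and `d = (1/2) min_j |β_{0S,j}|`.
If `max_j |β_j − β_{0S,j}| ≤ d` then
`|Σ_j (P(|β_j|) − P(|β_{0S,j}|))| ≤ ‖β − β_{0S}‖ √s P'(d)`. -/
theorem statement_10
    (s : ℕ) (hs : 0 < s)
    (P P' : ℝ → ℝ)
    (hP0 : P 0 = 0)
    (hconc : ConcaveOn ℝ (Set.Ici 0) P)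
    (hmono : MonotoneOn P (Set.Ici 0))
    (hderiv : ∀ t : ℝ, 0 < t → HasDerivAt P (P' t) t)
    (hcont : ContinuousOn P' (Set.Ioi 0))
    (β0S : EuclideanSpace ℝ (Fin s))
    (hnz : ∀ j, β0S j ≠ 0)
    (d : ℝ) (hd : d = (1/2) * ⨅ j : Fin s, |β0S j|)
    (β : EuclideanSpace ℝ (Fin s))
    (hclose : ∀ j, |β j - β0S j| ≤ d) :
    |∑ j, (P |β j| - P |β0S j|)| ≤ ‖β - β0S‖ * Real.sqrt s * P' d := by
  haveI : Nonempty (Fin s) := ⟨⟨0, hs⟩⟩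
  -- the infimum is attained and positive
  obtain ⟨j0, hj0⟩ := Finite.exists_min (fun j : Fin s => |β0S j|)
  have hinf_pos : 0 < ⨅ j : Fin s, |β0S j| := by
    have h1 : |β0S j0| ≤ ⨅ j : Fin s, |β0S j| := le_ciInf hj0
    exact lt_of_lt_of_le (abs_pos.2 (hnz j0)) h1
  have hdpos : 0 < d := by rw [hd]; positivity
  have hdmem : (d : ℝ) ∈ Set.Ici (0:ℝ) := le_of_lt hdpos
  have h2d : ∀ j, 2 * d ≤ |β0S j| := by
    intro j
    have : (⨅ j : Fin s, |β0S j|) ≤ |β0S j| :=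
      ciInf_le (Finite.bddBelow_range _) j
    rw [hd]; linarith
  -- P' is nonnegative at d and antitone on [d, ∞)
  have hmem : ∀ x : ℝ, d ≤ x → x ∈ Set.Ici (0:ℝ) := fun x hx => le_trans hdpos.le hx
  have hP'anti : ∀ x : ℝ, d ≤ x → P' x ≤ P' d := by
    intro x hx
    rcases eq_or_lt_of_le hx with h | h
    · rw [h]
    · have h1 : P' x ≤ slope P d x :=
        hconc.le_slope_of_hasDerivAt hdmem (hmem x hx) h (hderiv x (lt_trans hdpos h))
      have h2 : slope P d x ≤ P' d :=
        hconc.slope_le_of_hasDerivAt hdmem (hmem x hx) h (hderiv d hdpos)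
      linarith
  have hP'd_nonneg : 0 ≤ P' d := by
    have h1 : slope P d (2*d) ≤ P' d :=
      hconc.slope_le_of_hasDerivAt hdmem (Set.mem_Ici.2 (by linarith : (0:ℝ) ≤ 2*d))
        (by linarith) (hderiv d hdpos)
    have h2 : 0 ≤ slope P d (2*d) := by
      have := hmono hdmem (Set.mem_Ici.2 (by linarith : (0:ℝ) ≤ 2*d))
        (by linarith : d ≤ 2*d)
      rw [slope_def_field, div_nonneg_iff]
      left; constructor <;> linarith
    linarith
  -- Lipschitz bound on [d, ∞)
  have key : ∀ x y : ℝ, d ≤ x → d ≤ y → |P x - P y| ≤ P' d * |x - y| := by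
    have main : ∀ x y : ℝ, d ≤ x → d ≤ y → x ≤ y → P y - P x ≤ P' d * (y - x) := by
      intro x y hx hy hxy
      rcases eq_or_lt_of_le hxy with h | h
      · rw [h]; ring_nf; simp
      · have hne : y - x ≠ 0 := sub_ne_zero.2 h.ne'
        have h1 : slope P x y ≤ P' x :=
          hconc.slope_le_of_hasDerivAt (hmem x hx) (hmem y hy) h
            (hderiv x (lt_of_lt_of_le hdpos hx))
        have h2 : P' x ≤ P' d := hP'anti x hx
        have h3 : slope P x y = (P y - P x) / (y - x) := slope_def_field P x y
        have h4 : (P y - P x) / (y - x) ≤ P' d := by rw [← h3]; linarith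
        calc P y - P x = (P y - P x) / (y - x) * (y - x) :=
              (div_mul_cancel₀ _ hne).symm
          _ ≤ P' d * (y - x) := by
              apply mul_le_mul_of_nonneg_right h4; linarith
    intro x y hx hy
    rcases le_total x y with h | h
    · have h0 : P x ≤ P y := hmono (hmem x hx) (hmem y hy) h
      rw [abs_sub_comm, abs_of_nonneg (by linarith), abs_sub_comm, abs_of_nonneg (by linarith)]
      exact main x y hx hy h
    · have h0 : P y ≤ P x := hmono (hmem y hy) (hmem x hx) h
      rw [abs_of_nonneg (by linarith), abs_of_nonneg (by linarith)]
      exact main y x hy hx h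
  -- per-coordinate bound
  have coord : ∀ j, |P (|β j|) - P (|β0S j|)| ≤ P' d * |β j - β0S j| := by
    intro j
    have hb : d ≤ |β0S j| := by have := h2d j; linarith
    have ha : d ≤ |β j| := by
      have h1 : |β0S j| - |β j| ≤ |β j - β0S j| := by
        have := abs_sub_abs_le_abs_sub (β0S j) (β j)
        rwa [abs_sub_comm] at this
      have := hclose j; have := h2d j; linarith
    have h5 : |(|β j| - |β0S j|)| ≤ |β j - β0S j| := abs_abs_sub_abs_le_abs_sub _ _
    calc |P (|β j|) - P (|β0S j|)| ≤ P' d * |(|β j| - |β0S j|)| := key _ _ ha hb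
      _ ≤ P' d * |β j - β0S j| := mul_le_mul_of_nonneg_left h5 hP'd_nonneg
  -- Cauchy–Schwarz
  have hcs : ∑ j, |β j - β0S j| ≤ Real.sqrt s * ‖β - β0S‖ := by
    set u : EuclideanSpace ℝ (Fin s) := WithLp.toLp 2 (fun j => |β j - β0S j|) with hu
    set w : EuclideanSpace ℝ (Fin s) := WithLp.toLp 2 (fun _ => (1:ℝ)) with hw
    have hinner : inner ℝ w u = ∑ j, |β j - β0S j| := by
      simp [PiLp.inner_apply, hu, hw]
    have hnu : ‖u‖ = ‖β - β0S‖ := by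
      rw [EuclideanSpace.norm_eq, EuclideanSpace.norm_eq]
      congr 1
      apply Finset.sum_congr rfl
      intro j _
      simp [hu, abs_abs]
    have hnw : ‖w‖ = Real.sqrt s := by
      rw [EuclideanSpace.norm_eq]
      simp [hw]
    calc ∑ j, |β j - β0S j| = inner ℝ w u := hinner.symm
      _ ≤ ‖w‖ * ‖u‖ := real_inner_le_norm w u
      _ = Real.sqrt s * ‖β - β0S‖ := by rw [hnw, hnu]
  calc |∑ j, (P |β j| - P |β0S j|)| ≤ ∑ j, |P (|β j|) - P (|β0S j|)| :=
        Finset.abs_sum_le_sum_abs _ _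
    _ ≤ ∑ j, P' d * |β j - β0S j| := Finset.sum_le_sum fun j _ => coord j
    _ = P' d * ∑ j, |β j - β0S j| := by rw [Finset.mul_sum]
    _ ≤ P' d * (Real.sqrt s * ‖β - β0S‖) := mul_le_mul_of_nonneg_left hcs hP'd_nonneg
    _ = ‖β - β0S‖ * Real.sqrt s * P' d := by ring
end

section
/- Suppose Assumption 4.1 holds and β̂_S is an estimator satisfying ‖β̂_S − β_{0S}‖ = O_p(√(s log p / n) + √s·P_n'(d_n)) with √(s log p / n) + √s·P_n'(d_n) = o(d_n). Then ‖P_n'(|β̂_S|) ∘ sgn(β̂_S)‖ = O_p( sup_{‖β − β_{0S}‖ ≤ d_n/4} η(β) · √(s log p / n) + √s · P_n'(d_n) ), where P_n'(|β̂_S|) ∘ sgn(β̂_S) denotes the vector with components P_n'(|β̂_{Sj}|)·sgn(β̂_{Sj}), j = 1,…,s. -/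
/- Appendix B of Fan & Liao, "Endogeneity in high dimensions":
   general theory for penalized regressions with nonsmooth/general losses. -/

open MeasureTheory Filter Topology

noncomputable section

namespace FanLiaoB

/-- `Z_n = O_p(a_n)`. -/
def IsBigOp {Ω : Type*} [MeasureSpace Ω] (Z : ℕ → Ω → ℝ) (a : ℕ → ℝ) : Prop :=
  ∀ ε : ℝ, 0 < ε → ∃ M : ℝ, 0 < M ∧ ∀ᶠ n in Filter.atTop,
    (volume {ω | M * a n < |Z n ω|}).toReal ≤ ε

/-- `a` is a strict local minimizer of `f`. -/
def IsStrictLocalMin {E : Type*} [TopologicalSpace E] (f : E → ℝ) (a : E) : Prop :=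
  ∀ᶠ x in nhdsWithin a {a}ᶜ, f a < f x

/-- The local concavity `η(β)` of a penalty with derivative `P'`. -/
def eta {k : ℕ} (P' : ℝ → ℝ) (β : EuclideanSpace ℝ (Fin k)) : ℝ :=
  Filter.limsup (fun ε : ℝ =>
      ⨆ j : Fin k, sSup {r : ℝ | ∃ t₁ t₂ : ℝ, t₁ < t₂ ∧
        t₁ ∈ Set.Ioo (|β j| - ε) (|β j| + ε) ∧ t₂ ∈ Set.Ioo (|β j| - ε) (|β j| + ε) ∧
        r = -((P' t₂ - P' t₁) / (t₂ - t₁))})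
    (nhdsWithin 0 (Set.Ioi 0))

/-- Sparse penalized-regression setup: for each `n`, a (random) loss `L_n` on
`ℝ^{p_n}`, a true parameter `β₀` with support `S` of size `s_n`, and a penalty
`P_n` with derivative `P_n'`. -/
structure Setup (Ω : Type*) [MeasureSpace Ω] where
  p : ℕ → ℕ
  s : ℕ → ℕ
  β0 : ∀ n : ℕ, EuclideanSpace ℝ (Fin (p n))
  S : ∀ n : ℕ, Finset (Fin (p n))
  idx : ∀ n : ℕ, Fin (s n) → Fin (p n)
  L : ∀ n : ℕ, Ω → EuclideanSpace ℝ (Fin (p n)) → ℝ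
  P : ℕ → ℝ → ℝ
  P' : ℕ → ℝ → ℝ

variable {Ω : Type*} [MeasureSpace Ω]

/-- minimal signal strength `d_n = (1/2) min_{j ∈ S} |β_{0j}|` -/
def d (M : Setup Ω) (n : ℕ) : ℝ := (1/2) * ⨅ j : Fin (M.s n), |M.β0 n (M.idx n j)|

/-- the nonzero subvector `β_{0S}` -/
def β0S (M : Setup Ω) (n : ℕ) : EuclideanSpace ℝ (Fin (M.s n)) :=
  WithLp.toLp 2 (fun j => M.β0 n (M.idx n j))

/-- embed an `s`-dimensional vector into `ℝ^p` on the oracle coordinates `S`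
(the oracle space `B`). -/
def emb (M : Setup Ω) (n : ℕ) (βS : EuclideanSpace ℝ (Fin (M.s n))) :
    EuclideanSpace ℝ (Fin (M.p n)) :=
  WithLp.toLp 2 (fun k => ∑ j, if M.idx n j = k then βS j else 0)

/-- the restricted loss `β_S ↦ L_n(β_S, 0)` on the oracle space -/
def Lres (M : Setup Ω) (n : ℕ) (ω : Ω)
    (βS : EuclideanSpace ℝ (Fin (M.s n))) : ℝ :=
  M.L n ω (emb M n βS)

/-- the projection `𝕋` onto the oracle space: coordinates outside `S` are set to `0` -/
def Tproj (M : Setup Ω) (n : ℕ) (β : EuclideanSpace ℝ (Fin (M.p n))) :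
    EuclideanSpace ℝ (Fin (M.p n)) :=
  WithLp.toLp 2 (fun k => if k ∈ M.S n then β k else 0)

/-- Assumption 4.1 of Fan & Liao on the penalty, plus the bookkeeping for the
support `S` and its enumeration `idx`. -/
structure PenAssumptions (M : Setup Ω) : Prop where
  supp : ∀ n, ∀ j, j ∈ M.S n ↔ M.β0 n j ≠ 0
  scard : ∀ n, (M.S n).card = M.s n
  spos : ∀ n, 0 < M.s n
  idx_inj : ∀ n, Function.Injective (M.idx n)
  idx_mem : ∀ n j, M.idx n j ∈ M.S n
  pen0 : ∀ n, M.P n 0 = 0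
  pen_concave : ∀ n, ConcaveOn ℝ (Set.Ici 0) (M.P n)
  pen_mono : ∀ n, MonotoneOn (M.P n) (Set.Ici 0)
  pen_deriv : ∀ n, ∀ t : ℝ, 0 < t → HasDerivAt (M.P n) (M.P' n t) t
  pen_deriv_cont : ∀ n, ContinuousOn (M.P' n) (Set.Ioi 0)
  /-- `√s P_n'(d_n) = o(d_n)` -/
  pen_rate : Filter.Tendsto
    (fun n : ℕ => Real.sqrt (M.s n) * M.P' n (d M n) / d M n) Filter.atTop (nhds 0)
  /-- `sup_{‖β−β_{0S}‖ ≤ c d_n} η(β) = o(1)` for some `c > 0` -/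
  pen_eta : ∃ c : ℝ, 0 < c ∧ ∀ ε : ℝ, 0 < ε → ∀ᶠ n in Filter.atTop,
    ∀ β : EuclideanSpace ℝ (Fin (M.s n)), ‖β - β0S M n‖ ≤ c * d M n →
      eta (M.P' n) β ≤ ε

/-- coordinate bound in Euclidean space -/
lemma abs_coord_le_norm {k : ℕ} (x : EuclideanSpace ℝ (Fin k)) (j : Fin k) :
    |x j| ≤ ‖x‖ := by
  rw [EuclideanSpace.norm_eq]
  have h1 : |x j| = Real.sqrt ((x j) ^ 2) := (Real.sqrt_sq_eq_abs _).symm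
  rw [h1]
  apply Real.sqrt_le_sqrt
  simp only [Real.norm_eq_abs, sq_abs]
  exact Finset.single_le_sum (fun i _ => sq_nonneg (x i)) (Finset.mem_univ j)

/-- the derivative of a concave function is antitone on `Ioi 0 ⊆ Ici 0` -/
lemma Pderiv_anti {P P' : ℝ → ℝ} (hconc : ConcaveOn ℝ (Set.Ici 0) P)
    (hderiv : ∀ t : ℝ, 0 < t → HasDerivAt P (P' t) t)
    {x y : ℝ} (hx : 0 < x) (hxy : x ≤ y) : P' y ≤ P' x := by
  rcases eq_or_lt_of_le hxy with rfl | hlt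
  · exact le_rfl
  · have hy : 0 < y := hx.trans hlt
    have h1 : P' y ≤ slope P x y :=
      hconc.le_slope_of_hasDerivAt (le_of_lt hx) (le_of_lt hy) hlt (hderiv y hy)
    have h2 : slope P x y ≤ P' x :=
      hconc.slope_le_of_hasDerivAt (le_of_lt hx) (le_of_lt hy) hlt (hderiv x hx)
    exact h1.trans h2

/-- the derivative of a monotone concave function is nonnegative on `Ioi 0` -/
lemma Pderiv_nonneg {P P' : ℝ → ℝ} (hconc : ConcaveOn ℝ (Set.Ici 0) P)
    (hmono : MonotoneOn P (Set.Ici 0))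
    (hderiv : ∀ t : ℝ, 0 < t → HasDerivAt P (P' t) t)
    {t : ℝ} (ht : 0 < t) : 0 ≤ P' t := by
  have hlt : t < t + 1 := by linarith
  have ht1 : (0:ℝ) ≤ t + 1 := by linarith
  have h2 : slope P t (t + 1) ≤ P' t :=
    hconc.slope_le_of_hasDerivAt (le_of_lt ht) ht1 hlt (hderiv t ht)
  refine le_trans ?_ h2
  rw [slope_def_field]
  apply div_nonneg _ (by linarith)
  have := hmono (le_of_lt ht) ht1 (le_of_lt hlt)
  linarith

/-- `η(β) ≥ 0` when all entries of `β` are nonzero and `P'` is antitone on `(0,∞)`. -/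
lemma eta_nonneg {k : ℕ} (hk : 0 < k) (P' : ℝ → ℝ)
    (hanti : ∀ {x y : ℝ}, 0 < x → x ≤ y → P' y ≤ P' x)
    (β : EuclideanSpace ℝ (Fin k)) (hβ : ∀ j, β j ≠ 0) :
    0 ≤ eta P' β := by
  set f : ℝ → ℝ := fun ε =>
    ⨆ j : Fin k, sSup {r : ℝ | ∃ t₁ t₂ : ℝ, t₁ < t₂ ∧
        t₁ ∈ Set.Ioo (|β j| - ε) (|β j| + ε) ∧ t₂ ∈ Set.Ioo (|β j| - ε) (|β j| + ε) ∧
        r = -((P' t₂ - P' t₁) / (t₂ - t₁))} with hf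
  let j₀ : Fin k := ⟨0, hk⟩
  have hβ0 : 0 < |β j₀| := abs_pos.2 (hβ j₀)
  have hev : ∀ᶠ ε in nhdsWithin (0:ℝ) (Set.Ioi 0), 0 ≤ f ε := by
    filter_upwards [Ioo_mem_nhdsGT_of_mem (Set.left_mem_Ico.2 hβ0)] with ε hε
    obtain ⟨hε0, hεβ⟩ := hε
    refine Real.iSup_nonneg' ⟨j₀, ?_⟩
    have hr : (0:ℝ) ≤ -((P' (|β j₀| + ε/2) - P' (|β j₀|)) / ((|β j₀| + ε/2) - |β j₀|)) := by
      have h1 : P' (|β j₀| + ε/2) ≤ P' (|β j₀|) := hanti hβ0 (by linarith)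
      have h2 : (0:ℝ) < (|β j₀| + ε/2) - |β j₀| := by linarith
      have := div_nonpos_of_nonpos_of_nonneg (by linarith : P' (|β j₀| + ε/2) - P' (|β j₀|) ≤ 0)
        (le_of_lt h2)
      linarith
    refine Real.sSup_nonneg' ⟨_, ⟨|β j₀|, |β j₀| + ε/2, by linarith, ⟨by linarith, by linarith⟩,
      ⟨by linarith, by linarith⟩, rfl⟩, hr⟩
  by_cases hbdd : Filter.IsBoundedUnder (· ≤ ·) (nhdsWithin (0:ℝ) (Set.Ioi 0)) f
  · exact Filter.le_limsup_of_frequently_le hev.frequently hbdd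
  · have hempty : {a : ℝ | ∀ᶠ ε in nhdsWithin (0:ℝ) (Set.Ioi 0), f ε ≤ a} = ∅ := by
      rw [Set.eq_empty_iff_forall_notMem]
      intro a ha
      exact hbdd ⟨a, by rwa [Filter.eventually_map]⟩
    unfold eta
    rw [← hf, Filter.limsup_eq, hempty, Real.sInf_empty]

/-- **Lemma C.2** (Fan–Liao).  Under Assumption 4.1, if
`‖β̂_S − β_{0S}‖ = O_p(√(s log p/n) + √s P_n'(d_n))` with
`√(s log p/n) + √s P_n'(d_n) = o(d_n)`, then
`‖P_n'(|β̂_S|) ∘ sgn(β̂_S)‖ = O_p(sup_{‖β−β_{0S}‖≤d_n/4} η(β) √(s log p/n)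
+ √s P_n'(d_n))`. -/
theorem statement_15
    [IsProbabilityMeasure (volume : Measure Ω)]
    (M : Setup Ω) (A : PenAssumptions M)
    (βhatS : ∀ n : ℕ, Ω → EuclideanSpace ℝ (Fin (M.s n)))
    (hrate : IsBigOp (fun n ω => ‖βhatS n ω - β0S M n‖)
      (fun n : ℕ => Real.sqrt (M.s n * Real.log (M.p n) / (n:ℝ))
        + Real.sqrt (M.s n) * M.P' n (d M n)))
    (hsmall : Filter.Tendsto (fun n : ℕ =>
        (Real.sqrt (M.s n * Real.log (M.p n) / (n:ℝ))
          + Real.sqrt (M.s n) * M.P' n (d M n)) / d M n)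
      Filter.atTop (nhds 0)) :
    IsBigOp (fun n ω =>
        Real.sqrt (∑ j, (M.P' n |βhatS n ω j| * Real.sign (βhatS n ω j))^2))
      (fun n : ℕ =>
        sSup (eta (M.P' n) '' {β | ‖β - β0S M n‖ ≤ d M n / 4})
            * Real.sqrt (M.s n * Real.log (M.p n) / (n:ℝ))
          + Real.sqrt (M.s n) * M.P' n (d M n)) := by
  -- abbreviations
  set b : ℕ → ℝ := fun n => Real.sqrt (M.s n * Real.log (M.p n) / (n:ℝ))
    + Real.sqrt (M.s n) * M.P' n (d M n) with hb
  -- d_n > 0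
  have d_pos : ∀ n, 0 < d M n := by
    intro n
    have : Nonempty (Fin (M.s n)) := ⟨⟨0, A.spos n⟩⟩
    obtain ⟨j₀, hj₀⟩ := Finite.exists_min (fun j : Fin (M.s n) => |M.β0 n (M.idx n j)|)
    have h1 : 0 < |M.β0 n (M.idx n j₀)| :=
      abs_pos.2 ((A.supp n (M.idx n j₀)).1 (A.idx_mem n j₀))
    have h2 : |M.β0 n (M.idx n j₀)| ≤ ⨅ j : Fin (M.s n), |M.β0 n (M.idx n j)| :=
      le_ciInf hj₀
    unfold d
    nlinarith
  -- coordinates of β0S are at least 2 d_n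
  have hcoord : ∀ n j, 2 * d M n ≤ |β0S M n j| := by
    intro n j
    have : Nonempty (Fin (M.s n)) := ⟨⟨0, A.spos n⟩⟩
    have h1 : (⨅ j : Fin (M.s n), |M.β0 n (M.idx n j)|) ≤ |M.β0 n (M.idx n j)| :=
      ciInf_le (Set.Finite.bddBelow (Set.finite_range _)) j
    unfold d
    unfold β0S
    simp only [PiLp.toLp_apply]
    linarith [h1]
  -- antitonicity and nonnegativity of P'
  have hanti : ∀ n {x y : ℝ}, 0 < x → x ≤ y → M.P' n y ≤ M.P' n x := by
    intro n x y hx hxy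
    exact Pderiv_anti (A.pen_concave n) (A.pen_deriv n) hx hxy
  have hnonneg : ∀ n {t : ℝ}, 0 < t → 0 ≤ M.P' n t := by
    intro n t ht
    exact Pderiv_nonneg (A.pen_concave n) (A.pen_mono n) (A.pen_deriv n) ht
  -- the sSup of eta over the ball is nonnegative
  have hc_nonneg : ∀ n, 0 ≤ sSup (eta (M.P' n) '' {β | ‖β - β0S M n‖ ≤ d M n / 4}) := by
    intro n
    refine Real.sSup_nonneg' ⟨eta (M.P' n) (β0S M n), ⟨β0S M n, ?_, rfl⟩, ?_⟩
    · simp only [Set.mem_setOf_eq, sub_self, norm_zero]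
      linarith [d_pos n]
    · refine eta_nonneg (A.spos n) (M.P' n) (fun {x y} hx hxy => hanti n hx hxy) _ ?_
      intro j
      have hcj := hcoord n j
      have hdp := d_pos n
      intro h
      rw [h] at hcj
      simp at hcj
      linarith
  -- main argument
  intro ε hε
  obtain ⟨M₀, hM₀pos, hM₀⟩ := hrate ε hε
  have hsmall' : ∀ᶠ n in Filter.atTop, M₀ * b n ≤ d M n := by
    have h1 := Filter.Tendsto.eventually_lt_const (show (0:ℝ) < 1/M₀ by positivity) hsmall
    filter_upwards [h1] with n hn
    have hd := d_pos n
    rw [div_lt_div_iff₀ (by positivity) (by positivity)] at hn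
    show M₀ * (Real.sqrt (M.s n * Real.log (M.p n) / (n:ℝ))
      + Real.sqrt (M.s n) * M.P' n (d M n)) ≤ d M n
    nlinarith
  refine ⟨1, one_pos, ?_⟩
  filter_upwards [hM₀, hsmall'] with n h1 h2
  -- show the event inclusion
  refine le_trans (le_trans (ENNReal.toReal_mono (measure_ne_top _ _)
    (measure_mono ?_)) le_rfl) h1
  intro ω hω
  simp only [Set.mem_setOf_eq] at hω ⊢
  by_contra hcon
  push_neg at hcon
  rw [abs_norm] at hcon
  apply absurd hω
  push_neg
  rw [one_mul, abs_of_nonneg (Real.sqrt_nonneg _)]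
  -- on the good event, each coordinate bound holds
  have hnear : ‖βhatS n ω - β0S M n‖ ≤ d M n := le_trans hcon h2
  have hcoord2 : ∀ j, d M n ≤ |βhatS n ω j| := by
    intro j
    have ha : |βhatS n ω j - β0S M n j| ≤ d M n :=
      le_trans (abs_coord_le_norm (βhatS n ω - β0S M n) j) hnear
    have hb2 := hcoord n j
    have := abs_sub_abs_le_abs_sub (β0S M n j) (βhatS n ω j)
    rw [abs_sub_comm] at ha
    linarith
  -- bound each summand
  have hsum : (∑ j, (M.P' n |βhatS n ω j| * Real.sign (βhatS n ω j))^2)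
      ≤ (M.s n) * (M.P' n (d M n))^2 := by
    have hbound : ∀ j : Fin (M.s n),
        (M.P' n |βhatS n ω j| * Real.sign (βhatS n ω j))^2 ≤ (M.P' n (d M n))^2 := by
      intro j
      have hdn := d_pos n
      have hj := hcoord2 j
      have hP1 : 0 ≤ M.P' n |βhatS n ω j| := hnonneg n (lt_of_lt_of_le hdn hj)
      have hP2 : M.P' n |βhatS n ω j| ≤ M.P' n (d M n) := hanti n hdn hj
      have hs : |Real.sign (βhatS n ω j)| ≤ 1 := by
        rcases Real.sign_apply_eq (βhatS n ω j) with h | h | h <;> rw [h] <;> norm_num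
      have habs : |M.P' n |βhatS n ω j| * Real.sign (βhatS n ω j)| ≤ M.P' n (d M n) := by
        rw [abs_mul, abs_of_nonneg hP1]
        calc M.P' n |βhatS n ω j| * |Real.sign (βhatS n ω j)|
            ≤ M.P' n |βhatS n ω j| * 1 := by
              exact mul_le_mul_of_nonneg_left hs hP1
          _ = M.P' n |βhatS n ω j| := mul_one _
          _ ≤ M.P' n (d M n) := hP2
      calc (M.P' n |βhatS n ω j| * Real.sign (βhatS n ω j))^2
          = |M.P' n |βhatS n ω j| * Real.sign (βhatS n ω j)|^2 := (sq_abs _).symm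
        _ ≤ (M.P' n (d M n))^2 := by
            apply pow_le_pow_left₀ (abs_nonneg _) habs
    calc (∑ j, (M.P' n |βhatS n ω j| * Real.sign (βhatS n ω j))^2)
        ≤ ∑ _j : Fin (M.s n), (M.P' n (d M n))^2 :=
          Finset.sum_le_sum (fun j _ => hbound j)
      _ = (M.s n) * (M.P' n (d M n))^2 := by
          rw [Finset.sum_const, Finset.card_univ, Fintype.card_fin, nsmul_eq_mul]
  have hPd : 0 ≤ M.P' n (d M n) := hnonneg n (d_pos n)
  calc Real.sqrt (∑ j, (M.P' n |βhatS n ω j| * Real.sign (βhatS n ω j))^2)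
      ≤ Real.sqrt ((M.s n) * (M.P' n (d M n))^2) := Real.sqrt_le_sqrt hsum
    _ = Real.sqrt (M.s n) * M.P' n (d M n) := by
        rw [Real.sqrt_mul (by positivity), Real.sqrt_sq hPd]
    _ ≤ sSup (eta (M.P' n) '' {β | ‖β - β0S M n‖ ≤ d M n / 4})
          * Real.sqrt (M.s n * Real.log (M.p n) / (n:ℝ))
        + Real.sqrt (M.s n) * M.P' n (d M n) := by
        have := mul_nonneg (hc_nonneg n) (Real.sqrt_nonneg (M.s n * Real.log (M.p n) / (n:ℝ)))
        linarith

end FanLiaoB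
end
end
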